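/- Convergence of pseudo-curve generators in the supremum pseudo-metric implies Hausdorff convergence of the associated pseudo-curves: if (φ_n, G_n), n ≥ 1, and (φ, G) are pseudo-curve generators with d∞((φ_n,G_n),(φ,G)) → 0 as n → ∞, then the pseudo-curves PC_n (closures of the graphs of φ_n) converge to the pseudo-curve PC (closure of the graph of φ) in the Hausdorff distance: H(PC_n, PC) → 0. -/

import Mathlib

open Set Metric Filter

/-- The graph of `φ` over `G`. -/
def graphOn (G : Set UnitAddCircle) (φ : UnitAddCircle → ℝ) : Set (UnitAddCircle × ℝ) :=
  (fun θ => (θ, φ θ)) '' G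

lemma closure_graphOn_eq (G S : Set UnitAddCircle) (φ : UnitAddCircle → ℝ)
    (hS : S ⊆ G) (hd : Dense S) (hc : ContinuousOn φ G) :
    closure (graphOn G φ) = closure (graphOn S φ) := by
  apply le_antisymm
  · apply closure_minimal _ isClosed_closure
    intro p hp
    obtain ⟨θ, hθ, rfl⟩ := hp
    have h1 : ContinuousWithinAt (fun θ => (θ, φ θ)) S θ :=
      (continuousWithinAt_id.prodMk (hc θ hθ)).mono hS
    exact h1.mem_closure_image (hd θ)
  · exact closure_mono (image_mono hS)

/-- Convergence of pseudo-curve generators in the supremum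
pseudo-metric implies Hausdorff convergence of the associated pseudo-curves. -/
theorem statement19 (a b : ℝ) (hab : a ≤ b)
    (G : ℕ → Set UnitAddCircle) (hG : ∀ n, G n ∈ residual UnitAddCircle)
    (φ : ℕ → UnitAddCircle → ℝ)
    (hφc : ∀ n, ContinuousOn (φ n) (G n)) (hφI : ∀ n, ∀ θ ∈ G n, φ n θ ∈ Icc a b)
    (G0 : Set UnitAddCircle) (hG0 : G0 ∈ residual UnitAddCircle)
    (ψ : UnitAddCircle → ℝ) (hψc : ContinuousOn ψ G0) (hψI : ∀ θ ∈ G0, ψ θ ∈ Icc a b)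
    (hconv : Tendsto (fun n => sSup ((fun θ => |φ n θ - ψ θ|) '' (G n ∩ G0)))
      atTop (nhds 0)) :
    Tendsto (fun n => hausdorffDist (closure (graphOn (G n) (φ n)))
        (closure (graphOn G0 ψ))) atTop (nhds 0) := by
  set S : ℕ → Set UnitAddCircle := fun n => G n ∩ G0 with hSdef
  have hSres : ∀ n, S n ∈ residual UnitAddCircle := fun n =>
    inter_mem (hG n) hG0
  have hSdense : ∀ n, Dense (S n) := fun n => dense_of_mem_residual (hSres n)
  have hSne : ∀ n, (S n).Nonempty := fun n => (hSdense n).nonempty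
  -- bound on each |φ n θ - ψ θ|
  have habs : ∀ n, ∀ θ ∈ S n, |φ n θ - ψ θ| ≤ b - a := by
    intro n θ hθ
    have h1 := hφI n θ hθ.1
    have h2 := hψI θ hθ.2
    rw [abs_sub_le_iff]
    constructor <;> [linarith [h1.2, h2.1]; linarith [h1.1, h2.2]]
  have hbdd : ∀ n, BddAbove ((fun θ => |φ n θ - ψ θ|) '' (S n)) := by
    intro n
    exact ⟨b - a, fun x ⟨θ, hθ, hx⟩ => hx ▸ habs n θ hθ⟩
  have hle : ∀ n, ∀ θ ∈ S n, |φ n θ - ψ θ| ≤ sSup ((fun θ => |φ n θ - ψ θ|) '' (S n)) :=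
    fun n θ hθ => le_csSup (hbdd n) (mem_image_of_mem _ hθ)
  have hr0 : ∀ n, 0 ≤ sSup ((fun θ => |φ n θ - ψ θ|) '' (S n)) := by
    intro n
    obtain ⟨θ, hθ⟩ := hSne n
    exact le_trans (abs_nonneg _) (hle n θ hθ)
  have key : ∀ n, hausdorffDist (closure (graphOn (G n) (φ n))) (closure (graphOn G0 ψ))
      ≤ sSup ((fun θ => |φ n θ - ψ θ|) '' (S n)) := by
    intro n
    rw [closure_graphOn_eq (G n) (S n) (φ n) inter_subset_left (hSdense n) (hφc n),
      closure_graphOn_eq G0 (S n) ψ inter_subset_right (hSdense n) hψc,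
      hausdorffDist_closure]
    apply hausdorffDist_le_of_mem_dist (hr0 n)
    · rintro p ⟨θ, hθ, rfl⟩
      refine ⟨(θ, ψ θ), mem_image_of_mem _ hθ, ?_⟩
      simp only [Prod.dist_eq, dist_self, Real.dist_eq]
      exact max_le (le_trans (by simp) (hr0 n)) (hle n θ hθ)
    · rintro p ⟨θ, hθ, rfl⟩
      refine ⟨(θ, φ n θ), mem_image_of_mem _ hθ, ?_⟩
      simp only [Prod.dist_eq, dist_self, Real.dist_eq]
      rw [abs_sub_comm]
      exact max_le (le_trans (by simp) (hr0 n)) (hle n θ hθ)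
  exact squeeze_zero (fun n => hausdorffDist_nonneg) key hconv
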